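/- The tableau calculus T_{K_m} is sound and constructively complete for the logic K_m: (soundness) every fully expanded T_{K_m}-tableau for a satisfiable finite set N of K_m-formulas has an open branch; (constructive completeness) for every open branch B of a fully expanded T_{K_m}-tableau there exists a K_m-model I(B), whose domain is the set of labels occurring in B, in which every tableau formula of B is true: T(φ,t)∈B implies I(B),t ⊨ φ; F(φ,t)∈B implies I(B),t ⊭ φ; T_R(a,t,t')∈B implies (t,t')∈R_a in I(B); F_R(a,t,t')∈B implies (t,t')∉R_a in I(B). -/

import Mathlib

set_option autoImplicit false

namespace KmTableau

/-- Formulas of the multi-modal logic `K_m`: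
`φ ::= p | ¬φ | φ∨φ | [a]φ`, with propositional variables `p : ℕ`
and relational constants `a : Fin m`. -/
inductive Fm (m : ℕ) : Type
  | var : ℕ → Fm m
  | neg : Fm m → Fm m
  | or : Fm m → Fm m → Fm m
  | box : Fin m → Fm m → Fm m

/-- A `K_m`-model `M = (W, (R_a)_a, V)` with `W` nonempty. -/
structure KModel (m : ℕ) where
  W : Type
  ne : Nonempty W
  R : Fin m → W → W → Prop
  V : ℕ → W → Prop

/-- Satisfaction in a `K_m`-model. -/
def KModel.sat {m : ℕ} (M : KModel m) : M.W → Fm m → Prop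
  | v, .var p => M.V p v
  | v, .neg φ => ¬ M.sat v φ
  | v, .or φ ψ => M.sat v φ ∨ M.sat v ψ
  | v, .box a φ => ∀ w, M.R a v w → M.sat w φ

/-- A set of formulas is satisfiable if some model and world satisfy all its members. -/
def Satisfiable {m : ℕ} (N : Set (Fm m)) : Prop :=
  ∃ (M : KModel m) (v : M.W), ∀ φ ∈ N, M.sat v φ

/-- Labels: terms generated from the initial constant `a₀` and Skolem terms `f(a,φ,t)`. -/
inductive Label (m : ℕ) : Type
  | a0 : Label m
  | sk : Fin m → Fm m → Label m → Label m

/-- Tableau formulas: `T(φ,t)`, `F(φ,t)`, `T_R(a,t,t')`, `F_R(a,t,t')`. -/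
inductive TabFm (m : ℕ) : Type
  | T : Fm m → Label m → TabFm m
  | F : Fm m → Label m → TabFm m
  | TR : Fin m → Label m → Label m → TabFm m
  | FR : Fin m → Label m → Label m → TabFm m

/-- The labels occurring in a tableau formula. -/
def TabFm.labels {m : ℕ} : TabFm m → Set (Label m)
  | .T _ t => {t}
  | .F _ t => {t}
  | .TR _ t t' => {t, t'}
  | .FR _ t t' => {t, t'}

/-- The labels occurring in a set of tableau formulas (the initial label `a₀`,
introduced at the root, always counts as occurring). -/
def Lab {m : ℕ} (B : Set (TabFm m)) : Set (Label m) :=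
  insert Label.a0 {t | ∃ f ∈ B, t ∈ f.labels}

/-- A calculus: `C s ds` holds if, on a branch whose set of formulas is `s`, some rule
of the calculus is applicable with denominator instances `ds` (a closure rule
application has `ds = []`). -/
abbrev Calc (m : ℕ) := Set (TabFm m) → List (Set (TabFm m)) → Prop

/-- The root node `{T(φ,a₀) | φ ∈ N}` of a tableau for input `N`. -/
def initial {m : ℕ} (N : Set (Fm m)) : Set (TabFm m) :=
  {f | ∃ φ ∈ N, f = TabFm.T φ Label.a0}

/-- A tableau for input `N` in calculus `C`: a finitely branching tree of sets of tableau
formulas (nodes indexed by positions `List ℕ`, children of `p` being `p ++ [i]`), whose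
root is `{T(φ,a₀) | φ ∈ N}`, and such that the children of every node are obtained by
applying a rule of `C`: each child adds one denominator instance to the node's set. -/
structure Tableau (m : ℕ) (C : Calc m) (N : Set (Fm m)) where
  node : List ℕ → Option (Set (TabFm m))
  rootEq : node [] = some (initial N)
  tree : ∀ (p : List ℕ) (i : ℕ), node (p ++ [i]) ≠ none → node p ≠ none
  step : ∀ (p : List ℕ) (s : Set (TabFm m)), node p = some s →
    (∀ i : ℕ, node (p ++ [i]) = none) ∨
    (∃ ds, C s ds ∧ ∀ i : ℕ, node (p ++ [i]) = (ds[i]?).map (fun d => s ∪ d))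

/-- A branch of a tableau: a maximal path from the root (represented by its
set of positions, a maximal chain under the prefix order). -/
structure Branch {m : ℕ} {C : Calc m} {N : Set (Fm m)} (Tb : Tableau m C N) where
  pos : Set (List ℕ)
  inTree : ∀ p ∈ pos, Tb.node p ≠ none
  chain : ∀ p ∈ pos, ∀ q ∈ pos, p <+: q ∨ q <+: p
  downClosed : ∀ p ∈ pos, ∀ q : List ℕ, q <+: p → q ∈ pos
  maximal : ∀ q : List ℕ, Tb.node q ≠ none → (∀ p ∈ pos, p <+: q ∨ q <+: p) → q ∈ pos

/-- The set of tableau formulas occurring on a branch. -/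
def Branch.fmls {m : ℕ} {C : Calc m} {N : Set (Fm m)} {Tb : Tableau m C N}
    (Br : Branch Tb) : Set (TabFm m) :=
  {f | ∃ p ∈ Br.pos, ∃ s, Tb.node p = some s ∧ f ∈ s}

/-- A branch is open if no closure rule has been applied (is applicable) on it. -/
def Branch.IsOpen {m : ℕ} {C : Calc m} {N : Set (Fm m)} {Tb : Tableau m C N}
    (Br : Branch Tb) : Prop := ¬ C Br.fmls []

/-- A tableau is fully expanded if on every open branch every applicable rule has been
applied, i.e. some denominator instance of the rule is already contained in the branch. -/
def Tableau.Expanded {m : ℕ} {C : Calc m} {N : Set (Fm m)} (Tb : Tableau m C N) : Prop :=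
  ∀ Br : Branch Tb, Br.IsOpen → ∀ ds, C Br.fmls ds → ∃ d ∈ ds, d ⊆ Br.fmls

/-- The calculus `T_{K_m}`. -/
def TKm (m : ℕ) : Calc m := fun s ds =>
  -- (¬⁺) T(¬p,x) / F(p,x)
  (∃ φ x, TabFm.T (.neg φ) x ∈ s ∧ ds = [{TabFm.F φ x}]) ∨
  -- (¬⁻) F(¬p,x) / T(p,x)
  (∃ φ x, TabFm.F (.neg φ) x ∈ s ∧ ds = [{TabFm.T φ x}]) ∨
  -- (∨⁺) T(p∨q,x) / T(p,x) | T(q,x)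
  (∃ φ ψ x, TabFm.T (.or φ ψ) x ∈ s ∧ ds = [{TabFm.T φ x}, {TabFm.T ψ x}]) ∨
  -- (∨⁻) F(p∨q,x) / F(p,x), F(q,x)
  (∃ φ ψ x, TabFm.F (.or φ ψ) x ∈ s ∧ ds = [{TabFm.F φ x, TabFm.F ψ x}]) ∨
  -- (box) T([r]p,x) / F_R(r,x,y) | T(p,y), for any label y occurring on the branch
  (∃ a φ x y, TabFm.T (.box a φ) x ∈ s ∧ y ∈ Lab s ∧
    ds = [{TabFm.FR a x y}, {TabFm.T φ y}]) ∨
  -- (dia) F([r]p,x) / T_R(r,x,f(r,p,x)), F(p,f(r,p,x))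
  (∃ a φ x, TabFm.F (.box a φ) x ∈ s ∧
    ds = [{TabFm.TR a x (Label.sk a φ x), TabFm.F φ (Label.sk a φ x)}]) ∨
  -- closure rules
  (∃ φ x, TabFm.T φ x ∈ s ∧ TabFm.F φ x ∈ s ∧ ds = []) ∨
  (∃ a x y, TabFm.TR a x y ∈ s ∧ TabFm.FR a x y ∈ s ∧ ds = [])

/-- A `K_m`-model whose domain is (a set of) labels: the model `I(B)` constructed from a
branch has domain the set of labels occurring in `B`. -/
structure LModel (m : ℕ) where
  R : Fin m → Label m → Label m → Prop
  V : ℕ → Label m → Prop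

/-- Satisfaction in a label model relativised to its domain `D`. -/
def LModel.sat {m : ℕ} (M : LModel m) (D : Set (Label m)) : Label m → Fm m → Prop
  | t, .var p => M.V p t
  | t, .neg φ => ¬ M.sat D t φ
  | t, .or φ ψ => M.sat D t φ ∨ M.sat D t ψ
  | t, .box a φ => ∀ t' ∈ D, M.R a t t' → M.sat D t' φ

/-- Every tableau formula of `B` is true in the model `M` with domain `Lab B`:
`T(φ,t) ∈ B` implies `φ` holds at `t`; `F(φ,t) ∈ B` implies `φ` fails at `t`;
`T_R(a,t,t') ∈ B` implies `(t,t') ∈ R_a`; `F_R(a,t,t') ∈ B` implies `(t,t') ∉ R_a`. -/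
def Reflects {m : ℕ} (M : LModel m) (B : Set (TabFm m)) : Prop :=
  (∀ φ t, TabFm.T φ t ∈ B → M.sat (Lab B) t φ) ∧
  (∀ φ t, TabFm.F φ t ∈ B → ¬ M.sat (Lab B) t φ) ∧
  (∀ a t t', TabFm.TR a t t' ∈ B → M.R a t t') ∧
  (∀ a t t', TabFm.FR a t t' ∈ B → ¬ M.R a t t')

/-- The tableau calculus `T_{K_m}` is sound and constructively complete
for the logic `K_m`: every fully expanded `T_{K_m}`-tableau for a satisfiable finite set
`N` of `K_m`-formulas has an open branch; and for every open branch `B` of a fully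
expanded `T_{K_m}`-tableau there exists a `K_m`-model `I(B)`, whose domain is the set of
labels occurring in `B`, in which every tableau formula of `B` is true. -/
theorem complete_aux {m : ℕ} (B : Set (TabFm m))
    (hexp : ∀ ds, TKm m B ds → ∃ d ∈ ds, d ⊆ B)
    (hopen : ¬ TKm m B []) : ∃ M : LModel m, Reflects M B := by
  classical
  refine ⟨⟨fun a t t' => TabFm.TR a t t' ∈ B, fun p t => TabFm.T (.var p) t ∈ B⟩, ?_⟩
  set M : LModel m :=
    ⟨fun a t t' => TabFm.TR a t t' ∈ B, fun p t => TabFm.T (.var p) t ∈ B⟩ with hM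
  have noTF : ∀ φ t, TabFm.T φ t ∈ B → TabFm.F φ t ∈ B → False := fun φ t h1 h2 =>
    hopen (Or.inr (Or.inr (Or.inr (Or.inr (Or.inr (Or.inr (Or.inl ⟨φ, t, h1, h2, rfl⟩)))))))
  have noR : ∀ a t t', TabFm.TR a t t' ∈ B → TabFm.FR a t t' ∈ B → False := fun a t t' h1 h2 =>
    hopen (Or.inr (Or.inr (Or.inr (Or.inr (Or.inr (Or.inr (Or.inr ⟨a, t, t', h1, h2, rfl⟩)))))))
  have key : ∀ φ : Fm m, ∀ t, (TabFm.T φ t ∈ B → M.sat (Lab B) t φ) ∧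
      (TabFm.F φ t ∈ B → ¬ M.sat (Lab B) t φ) := by
    intro φ
    induction φ with
    | var p =>
      intro t
      refine ⟨fun h => h, fun h hs => noTF _ _ hs h⟩
    | neg φ ih =>
      intro t
      constructor
      · intro h
        obtain ⟨d, hd, hsub⟩ := hexp _ (Or.inl ⟨φ, t, h, rfl⟩)
        simp only [List.mem_singleton] at hd
        subst hd
        exact fun hs => (ih t).2 (hsub rfl) hs
      · intro h
        obtain ⟨d, hd, hsub⟩ := hexp _ (Or.inr (Or.inl ⟨φ, t, h, rfl⟩))
        simp only [List.mem_singleton] at hd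
        subst hd
        exact fun hs => hs ((ih t).1 (hsub rfl))
    | or φ ψ ihφ ihψ =>
      intro t
      constructor
      · intro h
        obtain ⟨d, hd, hsub⟩ := hexp _ (Or.inr (Or.inr (Or.inl ⟨φ, ψ, t, h, rfl⟩)))
        simp only [List.mem_cons, List.mem_singleton, List.not_mem_nil, or_false] at hd
        rcases hd with hd | hd
        · subst hd; exact Or.inl ((ihφ t).1 (hsub rfl))
        · subst hd; exact Or.inr ((ihψ t).1 (hsub rfl))
      · intro h
        obtain ⟨d, hd, hsub⟩ := hexp _ (Or.inr (Or.inr (Or.inr (Or.inl ⟨φ, ψ, t, h, rfl⟩))))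
        simp only [List.mem_singleton] at hd
        subst hd
        rintro (hs | hs)
        · exact (ihφ t).2 (hsub (Or.inl rfl)) hs
        · exact (ihψ t).2 (hsub (Or.inr rfl)) hs
    | box a φ ih =>
      intro t
      constructor
      · intro h t' ht' hR
        obtain ⟨d, hd, hsub⟩ :=
          hexp _ (Or.inr (Or.inr (Or.inr (Or.inr (Or.inl ⟨a, φ, t, t', h, ht', rfl⟩)))))
        simp only [List.mem_cons, List.mem_singleton, List.not_mem_nil, or_false] at hd
        rcases hd with hd | hd
        · subst hd; exact absurd (hsub rfl) (fun hFR => noR a t t' hR hFR)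
        · subst hd; exact (ih t').1 (hsub rfl)
      · intro h
        obtain ⟨d, hd, hsub⟩ :=
          hexp _ (Or.inr (Or.inr (Or.inr (Or.inr (Or.inr (Or.inl ⟨a, φ, t, h, rfl⟩))))))
        simp only [List.mem_singleton] at hd
        subst hd
        intro hs
        have hTR : TabFm.TR a t (Label.sk a φ t) ∈ B := hsub (Or.inl rfl)
        have hF : TabFm.F φ (Label.sk a φ t) ∈ B := hsub (Or.inr rfl)
        have hmem : Label.sk a φ t ∈ Lab B :=
          Set.mem_insert_iff.mpr (Or.inr ⟨TabFm.TR a t (Label.sk a φ t), hTR, Or.inr rfl⟩)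
        exact (ih _).2 hF (hs _ hmem hTR)
  exact ⟨fun φ t h => (key φ t).1 h, fun φ t h => (key φ t).2 h,
    fun a t t' h => h, fun a t t' h hR => noR a t t' hR h⟩

open Classical in
/-- Canonical interpretation of labels in a model, picking Skolem witnesses. -/
noncomputable def iota {m : ℕ} (M : KModel m) (v : M.W) : Label m → M.W
  | .a0 => v
  | .sk a φ t =>
    if h : ∃ w, M.R a (iota M v t) w ∧ ¬ M.sat w φ then h.choose else v

/-- A set of tableau formulas is satisfied in `M` under label interpretation `ι`. -/
def Inv {m : ℕ} (M : KModel m) (ι : Label m → M.W) (s : Set (TabFm m)) : Prop :=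
  (∀ φ t, TabFm.T φ t ∈ s → M.sat (ι t) φ) ∧
  (∀ φ t, TabFm.F φ t ∈ s → ¬ M.sat (ι t) φ) ∧
  (∀ a t t', TabFm.TR a t t' ∈ s → M.R a (ι t) (ι t')) ∧
  (∀ a t t', TabFm.FR a t t' ∈ s → ¬ M.R a (ι t) (ι t'))

theorem Inv_union {m : ℕ} {M : KModel m} {ι : Label m → M.W} {s d : Set (TabFm m)}
    (hs : Inv M ι s) (hd : Inv M ι d) : Inv M ι (s ∪ d) := by
  obtain ⟨h1, h2, h3, h4⟩ := hs
  obtain ⟨g1, g2, g3, g4⟩ := hd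
  refine ⟨?_, ?_, ?_, ?_⟩
  · rintro φ t (h | h); exacts [h1 _ _ h, g1 _ _ h]
  · rintro φ t (h | h); exacts [h2 _ _ h, g2 _ _ h]
  · rintro a t t' (h | h); exacts [h3 _ _ _ h, g3 _ _ _ h]
  · rintro a t t' (h | h); exacts [h4 _ _ _ h, g4 _ _ _ h]

/-- One rule application preserves satisfiability into some denominator. -/
theorem Inv_step {m : ℕ} {M : KModel m} {v : M.W} {s : Set (TabFm m)}
    {ds : List (Set (TabFm m))}
    (hinv : Inv M (iota M v) s) (hC : TKm m s ds) :
    ∃ (i : ℕ) (d : Set (TabFm m)), ds[i]? = some d ∧ Inv M (iota M v) (s ∪ d) := by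
  classical
  set ι := iota M v with hι
  obtain ⟨h1, h2, h3, h4⟩ := hinv
  rcases hC with ⟨φ, x, hmem, rfl⟩ | ⟨φ, x, hmem, rfl⟩ | ⟨φ, ψ, x, hmem, rfl⟩ |
      ⟨φ, ψ, x, hmem, rfl⟩ | ⟨a, φ, x, y, hmem, hy, rfl⟩ | ⟨a, φ, x, hmem, rfl⟩ |
      ⟨φ, x, hmem1, hmem2, rfl⟩ | ⟨a, x, y, hmem1, hmem2, rfl⟩
  · -- ¬⁺
    refine ⟨0, {TabFm.F φ x}, rfl, Inv_union ⟨h1, h2, h3, h4⟩ ?_⟩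
    have := h1 _ _ hmem
    simp only [KModel.sat] at this
    refine ⟨?_, ?_, ?_, ?_⟩ <;> intros _ _ h
    all_goals simp_all [Set.mem_singleton_iff]
  · -- ¬⁻
    refine ⟨0, {TabFm.T φ x}, rfl, Inv_union ⟨h1, h2, h3, h4⟩ ?_⟩
    have := h2 _ _ hmem
    simp only [KModel.sat, not_not] at this
    refine ⟨?_, ?_, ?_, ?_⟩ <;> intros _ _ h
    all_goals simp_all [Set.mem_singleton_iff]
  · -- ∨⁺
    have := h1 _ _ hmem
    simp only [KModel.sat] at this
    rcases this with hφ | hψ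
    · refine ⟨0, {TabFm.T φ x}, rfl, Inv_union ⟨h1, h2, h3, h4⟩ ?_⟩
      refine ⟨?_, ?_, ?_, ?_⟩ <;> intros _ _ h
      all_goals simp_all [Set.mem_singleton_iff]
    · refine ⟨1, {TabFm.T ψ x}, rfl, Inv_union ⟨h1, h2, h3, h4⟩ ?_⟩
      refine ⟨?_, ?_, ?_, ?_⟩ <;> intros _ _ h
      all_goals simp_all [Set.mem_singleton_iff]
  · -- ∨⁻
    have := h2 _ _ hmem
    simp only [KModel.sat] at this
    push_neg at this
    refine ⟨0, {TabFm.F φ x, TabFm.F ψ x}, rfl, Inv_union ⟨h1, h2, h3, h4⟩ ?_⟩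
    refine ⟨?_, ?_, ?_, ?_⟩ <;> intros _ _ h <;>
      simp_all [Set.mem_insert_iff, Set.mem_singleton_iff] <;>
      (rcases h with ⟨rfl, rfl⟩ | ⟨rfl, rfl⟩) <;> tauto
  · -- box
    have hbox := h1 _ _ hmem
    simp only [KModel.sat] at hbox
    by_cases hR : M.R a (ι x) (ι y)
    · refine ⟨1, {TabFm.T φ y}, rfl, Inv_union ⟨h1, h2, h3, h4⟩ ?_⟩
      have := hbox _ hR
      refine ⟨?_, ?_, ?_, ?_⟩ <;> intros _ _ h
      all_goals simp_all [Set.mem_singleton_iff]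
    · refine ⟨0, {TabFm.FR a x y}, rfl, Inv_union ⟨h1, h2, h3, h4⟩ ?_⟩
      refine ⟨?_, ?_, ?_, ?_⟩ <;> intros _ _ h
      all_goals simp_all [Set.mem_singleton_iff]
  · -- dia
    have hdia := h2 _ _ hmem
    simp only [KModel.sat] at hdia
    push_neg at hdia
    have hex : ∃ w, M.R a (iota M v x) w ∧ ¬ M.sat w φ := hdia
    have hval : ι (Label.sk a φ x) = hex.choose := by
      rw [hι]
      rw [iota]
      rw [dif_pos hex]
    have hRw : M.R a (ι x) (ι (Label.sk a φ x)) := by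
      rw [hval]; exact hex.choose_spec.1
    have hsat : ¬ M.sat (ι (Label.sk a φ x)) φ := by
      rw [hval]; exact hex.choose_spec.2
    refine ⟨0, {TabFm.TR a x (Label.sk a φ x), TabFm.F φ (Label.sk a φ x)}, rfl, Inv_union ⟨h1, h2, h3, h4⟩ ?_⟩
    refine ⟨?_, ?_, ?_, ?_⟩ <;> intros _ _ h
    all_goals simp_all [Set.mem_insert_iff, Set.mem_singleton_iff]
  · exact absurd (h1 _ _ hmem1) (h2 _ _ hmem2)
  · exact absurd (h3 _ _ _ hmem1) (h4 _ _ _ hmem2)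

open Classical in
/-- A path through the tree following "good" child positions. -/
noncomputable def path (G : List ℕ → Prop) : ℕ → List ℕ
  | 0 => []
  | n + 1 =>
    if h : ∃ i : ℕ, G (path G n ++ [i]) then path G n ++ [h.choose] else path G n

theorem path_good {G : List ℕ → Prop} (h0 : G []) : ∀ n, G (path G n) := by
  intro n
  induction n with
  | zero => exact h0
  | succ n ih =>
    rw [path]
    split
    · next h => exact h.choose_spec
    · exact ih

theorem path_prefix_succ (G : List ℕ → Prop) (n : ℕ) : path G n <+: path G (n + 1) := by
  conv_rhs => rw [path]
  split
  · exact List.prefix_append _ _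
  · exact List.prefix_rfl

theorem path_mono (G : List ℕ → Prop) {n k : ℕ} (h : n ≤ k) : path G n <+: path G k := by
  induction k with
  | zero => rw [Nat.le_zero.mp h]
  | succ k ih =>
    rcases Nat.lt_or_ge n (k + 1) with h' | h'
    · exact (ih (Nat.lt_succ_iff.mp h')).trans (path_prefix_succ G k)
    · rw [le_antisymm h h']

theorem path_down (G : List ℕ → Prop) : ∀ n (q : List ℕ), q <+: path G n → ∃ k, path G k = q := by
  intro n
  induction n with
  | zero => intro q hq; exact ⟨0, (List.prefix_nil.mp hq).symm⟩
  | succ n ih =>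
    intro q hq
    rw [path] at hq
    split at hq
    · rcases List.prefix_concat_iff.mp hq with h' | h'
      · exact ⟨n + 1, by rw [path]; rw [dif_pos ‹_›]; exact h'.symm⟩
      · exact ih q h'
    · exact ih q hq

theorem path_stall {G : List ℕ → Prop} {n : ℕ} (h : ¬ ∃ i : ℕ, G (path G n ++ [i])) :
    ∀ k, n ≤ k → path G k = path G n := by
  intro k hk
  induction k with
  | zero => rw [Nat.le_zero.mp hk]
  | succ k ih =>
    rcases Nat.lt_or_ge n (k + 1) with h' | h'
    · have hik := ih (Nat.lt_succ_iff.mp h')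
      rw [path, hik, dif_neg h]
    · rw [le_antisymm hk h']

theorem path_len {G : List ℕ → Prop} (h : ∀ n : ℕ, ∃ i : ℕ, G (path G n ++ [i])) :
    ∀ n, (path G n).length = n := by
  intro n
  induction n with
  | zero => rfl
  | succ n ih => rw [path, dif_pos (h n), List.length_append, ih, List.length_singleton]

theorem node_prefix {m : ℕ} {C : Calc m} {N : Set (Fm m)} (Tb : Tableau m C N) :
    ∀ q : List ℕ, Tb.node q ≠ none → ∀ r, r <+: q → Tb.node r ≠ none := by
  intro q
  induction q using List.reverseRecOn with
  | nil => intro h r hr; rw [List.prefix_nil.mp hr]; exact h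
  | append_singleton l i ih =>
    intro h r hr
    have hl : Tb.node l ≠ none := Tb.tree l i h
    rcases List.prefix_concat_iff.mp hr with h' | h'
    · rw [h']; exact h
    · exact ih hl r h'

theorem subset_child {m : ℕ} {C : Calc m} {N : Set (Fm m)} (Tb : Tableau m C N)
    {p : List ℕ} {s : Set (TabFm m)} {i : ℕ} {s' : Set (TabFm m)}
    (hp : Tb.node p = some s) (hc : Tb.node (p ++ [i]) = some s') : s ⊆ s' := by
  rcases Tb.step p s hp with hleaf | ⟨ds, _, hch⟩
  · rw [hleaf i] at hc; cases hc
  · have h := hch i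
    rw [hc] at h
    rcases h' : ds[i]? with _ | d
    · rw [h'] at h; cases h
    · rw [h'] at h
      simp only [Option.map_some] at h
      cases h
      exact Set.subset_union_left

theorem sound_aux {m : ℕ} (N : Set (Fm m)) (hsat : Satisfiable N)
    (Tb : Tableau m (TKm m) N) : ∃ Br : Branch Tb, Br.IsOpen := by
  classical
  obtain ⟨M, v, hv⟩ := hsat
  set ι : Label m → M.W := iota M v with hι
  set G : List ℕ → Prop := fun p => ∃ s, Tb.node p = some s ∧ Inv M ι s with hG
  have hG0 : G [] := by
    refine ⟨initial N, Tb.rootEq, ?_, ?_, ?_, ?_⟩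
    · rintro φ t ⟨ψ, hψ, heq⟩
      cases heq
      exact hv _ hψ
    · rintro φ t ⟨ψ, hψ, heq⟩; cases heq
    · rintro a t t' ⟨ψ, hψ, heq⟩; cases heq
    · rintro a t t' ⟨ψ, hψ, heq⟩; cases heq
  have hgood : ∀ n, G (path G n) := path_good hG0
  -- nodes along the path
  have hnode : ∀ n, Tb.node (path G n) ≠ none := by
    intro n; obtain ⟨s, hs, -⟩ := hgood n; rw [hs]; exact Option.some_ne_none _
  -- monotonicity of node sets along the path
  have hsub1 : ∀ n (s s' : Set (TabFm m)), Tb.node (path G n) = some s →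
      Tb.node (path G (n + 1)) = some s' → s ⊆ s' := by
    intro n s s' hs hs'
    by_cases h : ∃ i : ℕ, G (path G n ++ [i])
    · rw [path, dif_pos h] at hs'
      exact subset_child Tb hs hs'
    · rw [path, dif_neg h, hs] at hs'
      cases hs'
      exact subset_rfl
  have hsub : ∀ n k, n ≤ k → ∀ (s s' : Set (TabFm m)), Tb.node (path G n) = some s →
      Tb.node (path G k) = some s' → s ⊆ s' := by
    intro n k hk
    induction k with
    | zero =>
      intro s s' hs hs'
      rw [Nat.le_zero.mp hk] at hs; rw [hs] at hs'; cases hs'; exact subset_rfl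
    | succ k ih =>
      intro s s' hs hs'
      rcases Nat.lt_or_ge n (k + 1) with h' | h'
      · obtain ⟨sk, hsk, -⟩ := hgood k
        exact (ih (Nat.lt_succ_iff.mp h') s sk hs hsk).trans (hsub1 k sk s' hsk hs')
      · rw [le_antisymm hk h'] at hs; rw [hs] at hs'; cases hs'; exact subset_rfl
  set B0 : Set (TabFm m) :=
    {f | ∃ p, (∃ n, path G n = p) ∧ ∃ s, Tb.node p = some s ∧ f ∈ s} with hB0
  have hpair : ∀ f1 f2 : TabFm m, f1 ∈ B0 → f2 ∈ B0 →
      ∃ s : Set (TabFm m), Inv M ι s ∧ f1 ∈ s ∧ f2 ∈ s := by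
    rintro f1 f2 ⟨p1, ⟨n1, rfl⟩, s1, hs1, hf1⟩ ⟨p2, ⟨n2, rfl⟩, s2, hs2, hf2⟩
    obtain ⟨s, hs, hinv⟩ := hgood (max n1 n2)
    exact ⟨s, hinv, hsub n1 (max n1 n2) (le_max_left _ _) s1 s hs1 hs hf1,
      hsub n2 (max n1 n2) (le_max_right _ _) s2 s hs2 hs hf2⟩
  have hkey : ¬ TKm m B0 [] := by
    intro hC
    rcases hC with ⟨φ, x, hmem, heq⟩ | ⟨φ, x, hmem, heq⟩ | ⟨φ, ψ, x, hmem, heq⟩ |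
        ⟨φ, ψ, x, hmem, heq⟩ | ⟨a, φ, x, y, hmem, hy, heq⟩ | ⟨a, φ, x, hmem, heq⟩ |
        ⟨φ, x, h1, h2, -⟩ | ⟨a, x, y, h1, h2, -⟩
    · cases heq
    · cases heq
    · cases heq
    · cases heq
    · cases heq
    · cases heq
    · obtain ⟨s, hinv, hf1, hf2⟩ := hpair _ _ h1 h2
      exact hinv.2.1 _ _ hf2 (hinv.1 _ _ hf1)
    · obtain ⟨s, hinv, hf1, hf2⟩ := hpair _ _ h1 h2
      exact hinv.2.2.2 _ _ _ hf2 (hinv.2.2.1 _ _ _ hf1)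
  refine ⟨⟨{q | ∃ n, path G n = q}, ?_, ?_, ?_, ?_⟩, ?_⟩
  · rintro p ⟨n, rfl⟩; exact hnode n
  · rintro p ⟨n, rfl⟩ q ⟨k, rfl⟩
    rcases le_total n k with h | h
    · exact Or.inl (path_mono G h)
    · exact Or.inr (path_mono G h)
  · rintro p ⟨n, rfl⟩ q hq
    exact path_down G n q hq
  · -- maximality
    intro q hq hcomp
    by_cases hall : ∀ n : ℕ, ∃ i : ℕ, G (path G n ++ [i])
    · have hlen : ∀ n, (path G n).length = n := path_len hall
      rcases hcomp (path G q.length) ⟨q.length, rfl⟩ with h | h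
      · exact ⟨q.length, h.eq_of_length (by rw [hlen])⟩
      · exact ⟨q.length, (h.eq_of_length (by rw [hlen])).symm⟩
    · push_neg at hall
      obtain ⟨n0, hn0⟩ := hall
      have hleaf : ∀ i : ℕ, Tb.node (path G n0 ++ [i]) = none := by
        obtain ⟨s, hs, hinv⟩ := hgood n0
        rcases Tb.step (path G n0) s hs with hleaf | ⟨ds, hC, hch⟩
        · exact hleaf
        · obtain ⟨i, d, hget, hinv'⟩ := Inv_step hinv hC
          exact absurd (show G (path G n0 ++ [i]) from
            ⟨s ∪ d, by rw [hch i, hget]; rfl, hinv'⟩) (hn0 i)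
      rcases hcomp (path G n0) ⟨n0, rfl⟩ with h | h
      · obtain ⟨r, hr⟩ := h
        rcases r with _ | ⟨j, r'⟩
        · exact ⟨n0, by rw [← hr, List.append_nil]⟩
        · exfalso
          refine node_prefix Tb q hq (path G n0 ++ [j]) ⟨r', ?_⟩ (hleaf j)
          rw [← hr]; simp
      · exact path_down G n0 q h
  · -- openness
    exact hkey

theorem TKm_sound_and_constructively_complete (m : ℕ) :
    (∀ N : Set (Fm m), N.Finite → Satisfiable N →
      ∀ Tb : Tableau m (TKm m) N, Tb.Expanded → ∃ Br : Branch Tb, Br.IsOpen) ∧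
    (∀ (N : Set (Fm m)) (Tb : Tableau m (TKm m) N), Tb.Expanded →
      ∀ Br : Branch Tb, Br.IsOpen → ∃ M : LModel m, Reflects M Br.fmls) := by
  constructor
  · intro N _ hsat Tb _
    exact sound_aux N hsat Tb
  · intro N Tb hexp Br hopen
    exact complete_aux Br.fmls (hexp Br hopen) hopen

end KmTableau
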